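/- Let σ : X → Y be a covering map between second-countable, locally compact, Hausdorff, totally disconnected spaces, and let φ : Y → X be a section of σ that is a local homeomorphism. Then for every y ∈ Y there exist a compact open neighbourhood W of y, some n ∈ ℕ₊ ∪ {∞}, and pairwise disjoint compact open subsets U₁, U₂, … of X such that σ⁻¹(W) = ⋃ᵢ Uᵢ, each σ|Uᵢ : Uᵢ → W is a homeomorphism, and φ(W) = σ⁻¹(W) ∩ φ(Y) = U₁. -/

import Mathlib

/-- Let `σ : X → Y` be a covering map between second-countable, locally
compact, Hausdorff, totally disconnected spaces and `φ : Y → X` a section of `σ` that is a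
local homeomorphism. Then every `y ∈ Y` has a compact open neighbourhood `W` such that
`σ ⁻¹' W` is the union of a countable, nonempty, pairwise disjoint family of compact open
sets `U i`, each mapped homeomorphically onto `W` by `σ`, and the distinguished member
`U i₀` equals `φ '' W = σ ⁻¹' W ∩ φ(Y)`. -/
theorem coveringMap_section_local_structure
    {X Y : Type*} [TopologicalSpace X] [TopologicalSpace Y]
    [SecondCountableTopology X] [SecondCountableTopology Y]
    [LocallyCompactSpace X] [LocallyCompactSpace Y]
    [T2Space X] [T2Space Y]
    [TotallyDisconnectedSpace X] [TotallyDisconnectedSpace Y]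
    (σ : X → Y) (hsurj : Function.Surjective σ) (hσ : IsCoveringMap σ)
    (φ : Y → X) (hsec : ∀ y, σ (φ y) = y) (hφ : IsLocalHomeomorph φ) (y : Y) :
    ∃ (W : Set Y), IsCompact W ∧ IsOpen W ∧ y ∈ W ∧
      ∃ (ι : Type) (_ : Countable ι) (_ : Nonempty ι) (U : ι → Set X) (i₀ : ι),
        Pairwise (Function.onFun Disjoint U) ∧
        (⋃ i, U i) = σ ⁻¹' W ∧
        (∀ i, IsCompact (U i) ∧ IsOpen (U i) ∧
          ∃ e : (U i) ≃ₜ W, ∀ x : U i, (e x : Y) = σ x) ∧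
        φ '' W = σ ⁻¹' W ∩ Set.range φ ∧
        φ '' W = U i₀ := by
  classical
  have hcov := hσ y
  haveI hdisc : DiscreteTopology (σ ⁻¹' {y} : Set X) := hcov.1
  haveI : Nonempty (σ ⁻¹' {y} : Set X) := ⟨⟨φ y, by simp [hsec y]⟩⟩
  set t : Bundle.Trivialization (σ ⁻¹' {y} : Set X) σ := hcov.toTrivialization with ht
  have hyB : y ∈ t.baseSet := hcov.mem_toTrivialization_baseSet
  have hφy_src : φ y ∈ t.source := t.mem_source.2 (by rw [hsec]; exact hyB)
  set i₀ : (σ ⁻¹' {y} : Set X) := (t (φ y)).2 with hi₀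
  -- the sheet containing `φ y`
  set S : Set X := t.source ∩ t ⁻¹' (Set.univ ×ˢ ({i₀} : Set (σ ⁻¹' {y}))) with hS
  have hS_open : IsOpen S :=
    t.toOpenPartialHomeomorph.isOpen_inter_preimage (isOpen_univ.prod (isOpen_discrete _))
  have hφyS : φ y ∈ S := ⟨hφy_src, Set.mem_univ _, rfl⟩
  have hφcont : Continuous φ := hφ.continuous
  set O : Set Y := t.baseSet ∩ φ ⁻¹' S with hO
  have hO_open : IsOpen O := t.open_baseSet.inter (hS_open.preimage hφcont)
  have hyO : y ∈ O := ⟨hyB, hφyS⟩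
  -- choose a compact open neighbourhood `W ⊆ O` of `y`
  obtain ⟨K, hK_comp, hyK, hKO⟩ := exists_compact_subset hO_open hyO
  obtain ⟨W, hW_clopen, hyW, hWK⟩ :
      ∃ W ∈ {s : Set Y | IsClopen s}, y ∈ W ∧ W ⊆ interior K :=
    loc_compact_Haus_tot_disc_of_zero_dim.mem_nhds_iff.1 (isOpen_interior.mem_nhds hyK)
  have hW_comp : IsCompact W :=
    hK_comp.of_isClosed_subset hW_clopen.1 (hWK.trans interior_subset)
  have hWO : W ⊆ O := hWK.trans (interior_subset.trans hKO)
  have hWB : W ⊆ t.baseSet := fun w hw => (hWO hw).1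
  have hWS : ∀ w ∈ W, φ w ∈ S := fun w hw => (hWO hw).2
  -- basic facts
  have hsrc : ∀ {x : X}, σ x ∈ W → x ∈ t.source := fun hx => t.mem_source.2 (hWB hx)
  have hfst : ∀ {x : X}, x ∈ t.source → (t x).1 = σ x := fun hx => t.coe_fst hx
  -- the sheets
  set U : (σ ⁻¹' {y} : Set X) → Set X :=
    fun i => {x | σ x ∈ W ∧ x ∈ t.source ∧ (t x).2 = i} with hU
  haveI hne : Nonempty (σ ⁻¹' {y} : Set X) := ⟨⟨φ y, by simp [hsec y]⟩⟩
  have hφW : ∀ w ∈ W, φ w ∈ U i₀ := by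
    intro w hw
    have hs := hWS w hw
    exact ⟨by rw [hsec]; exact hw, hs.1, hs.2.2⟩
  have hinj := t.toOpenPartialHomeomorph.injOn
  -- pairwise disjoint
  have hdisj : Pairwise (Function.onFun Disjoint U) := by
    intro i j hij
    refine Set.disjoint_left.2 ?_
    rintro x ⟨-, -, hxi⟩ ⟨-, -, hxj⟩
    exact hij (hxi ▸ hxj.symm ▸ rfl)
  -- union is the preimage
  have hunion : (⋃ i, U i) = σ ⁻¹' W := by
    ext x
    simp only [Set.mem_iUnion, Set.mem_preimage]
    constructor
    · rintro ⟨i, hi, -⟩; exact hi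
    · intro hx
      exact ⟨(t x).2, hx, hsrc hx, rfl⟩
  -- each sheet is homeomorphic to W
  have key : ∀ i, ∃ e : (U i) ≃ₜ W, ∀ x : U i, (e x : Y) = σ x := by
    intro i
    have hmem : ∀ w : W, t.toOpenPartialHomeomorph.symm ((w : Y), i) ∈ U i := by
      intro w
      have hb : (w : Y) ∈ t.baseSet := hWB w.2
      have h1 : σ (t.toOpenPartialHomeomorph.symm ((w : Y), i)) = w := t.proj_symm_apply' hb
      have h2 : t (t.toOpenPartialHomeomorph.symm ((w : Y), i)) = ((w : Y), i) :=
        t.apply_symm_apply' hb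
      refine ⟨by rw [h1]; exact w.2, t.mem_source.2 (by rw [h1]; exact hb), by rw [h2]⟩
    refine ⟨{ toFun := fun x => ⟨σ (x : X), x.2.1⟩
              invFun := fun w => ⟨t.toOpenPartialHomeomorph.symm ((w : Y), i), hmem w⟩
              left_inv := ?_
              right_inv := ?_
              continuous_toFun := ?_
              continuous_invFun := ?_ }, fun x => rfl⟩
    · rintro ⟨x, hxW, hxs, hxi⟩
      have hx1 : t x = (σ x, i) := by rw [← hfst hxs, ← hxi]
      apply Subtype.ext
      show t.toOpenPartialHomeomorph.symm (σ x, i) = x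
      rw [← hx1]
      exact t.toOpenPartialHomeomorph.left_inv hxs
    · intro w
      apply Subtype.ext
      show σ (t.toOpenPartialHomeomorph.symm ((w : Y), i)) = w
      exact t.proj_symm_apply' (hWB w.2)
    · exact Continuous.subtype_mk (hσ.continuous.comp continuous_subtype_val) _
    · refine Continuous.subtype_mk ?_ _
      refine ContinuousOn.comp_continuous t.toOpenPartialHomeomorph.continuousOn_symm
        ((continuous_subtype_val.prodMk continuous_const)) ?_
      intro w
      exact t.mem_target.2 (hWB w.2)
  choose e he using key
  haveI : CompactSpace W := isCompact_iff_compactSpace.1 hW_comp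
  have hUprop : ∀ i, IsCompact (U i) ∧ IsOpen (U i) ∧
      ∃ e : (U i) ≃ₜ W, ∀ x : U i, (e x : Y) = σ x := by
    intro i
    have hopen : IsOpen (U i) := by
      have h1 : U i = σ ⁻¹' W ∩ (t.source ∩ t ⁻¹' (Set.univ ×ˢ ({i} : Set (σ ⁻¹' {y})))) := by
        ext x
        simp only [hU, Set.mem_setOf_eq, Set.mem_inter_iff, Set.mem_preimage, Set.mem_prod,
          Set.mem_univ, true_and, Set.mem_singleton_iff]
      rw [h1]
      exact (hW_clopen.2.preimage hσ.continuous).inter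
        (t.toOpenPartialHomeomorph.isOpen_inter_preimage (isOpen_univ.prod (isOpen_discrete _)))
    haveI : CompactSpace (U i) := (e i).symm.compactSpace
    exact ⟨isCompact_iff_compactSpace.2 inferInstance, hopen, e i, he i⟩
  have him : φ '' W = U i₀ := by
    apply Set.Subset.antisymm
    · rintro x ⟨w, hw, rfl⟩
      exact hφW w hw
    · rintro x ⟨hxW, hxs, hxi⟩
      have hφx := hφW (σ x) hxW
      refine ⟨σ x, hxW, ?_⟩
      have hx1 : t x = (σ x, i₀) := by rw [← hfst hxs, ← hxi]
      have hx2 : t (φ (σ x)) = (σ x, i₀) := by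
        have hh := hfst hφx.2.1
        rw [hsec] at hh
        exact Prod.ext hh hφx.2.2
      exact hinj hφx.2.1 hxs (hx2.trans hx1.symm)
  -- reindex by a type in `Type 0`
  haveI hcount : Countable (σ ⁻¹' {y} : Set X) :=
    TopologicalSpace.separableSpace_iff_countable.1 inferInstance
  obtain ⟨f, hf⟩ := Countable.exists_injective_nat (σ ⁻¹' {y} : Set X)
  let eqv : (σ ⁻¹' {y} : Set X) ≃ Set.range f := Equiv.ofInjective f hf
  refine ⟨W, hW_comp, hW_clopen.2, hyW, Set.range f, inferInstance,
    ⟨eqv (Classical.arbitrary _)⟩, fun i => U (eqv.symm i), eqv i₀, ?_, ?_,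
    fun i => hUprop _, ?_, by simpa using him⟩
  · intro i j hij
    exact hdisj (eqv.symm.injective.ne hij)
  · rw [eqv.symm.surjective.iUnion_comp U, hunion]
  · ext x
    constructor
    · rintro ⟨w, hw, rfl⟩
      exact ⟨by simpa [hsec] using hw, w, rfl⟩
    · rintro ⟨hx, w, rfl⟩
      exact ⟨w, by simpa [hsec] using hx, rfl⟩
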